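/- For all θ, φ₀, φ₁ ∈ [0, π/2] there exists φ ∈ [0, π/2] such that cos(θ/2)·cos φ₀ + sin(θ/2)·cos φ₁ = √2·cos φ and cos(θ/2) + sin(θ/2) + cos(θ/2)·sin φ₁ + sin(θ/2)·sin φ₀ ≤ √2 + √2·sin φ. -/

import Mathlib

open Real

lemma symmetrisation_aux (c s x0 y0 x1 y1 : ℝ)
    (hcs : c ^ 2 + s ^ 2 = 1) (h0 : x0 ^ 2 + y0 ^ 2 = 1) (h1 : x1 ^ 2 + y1 ^ 2 = 1)
    (hc0 : 0 ≤ c) (hs0 : 0 ≤ s) (hx0 : 0 ≤ x0) (hy0 : 0 ≤ y0)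
    (hx1 : 0 ≤ x1) (hy1 : 0 ≤ y1) :
    ∃ φ ∈ Set.Icc 0 (π / 2),
      c * y0 + s * y1 = Real.sqrt 2 * cos φ ∧
      c + s + c * x1 + s * x0 ≤ Real.sqrt 2 + Real.sqrt 2 * sin φ := by
  have hsqrt2 : (0:ℝ) < Real.sqrt 2 := by positivity
  have hsq2 : Real.sqrt 2 ^ 2 = 2 := Real.sq_sqrt (by norm_num)
  have hA0 : 0 ≤ c * y0 + s * y1 := by positivity
  have hAB : (c * y0 + s * y1) ^ 2 + (c * x1 + s * x0) ^ 2 ≤ 2 := by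
    nlinarith [sq_nonneg (c * y1 - s * y0), sq_nonneg (c * x0 - s * x1)]
  have hA2 : (c * y0 + s * y1) ^ 2 ≤ 2 := by nlinarith [sq_nonneg (c * x1 + s * x0)]
  have hAle : c * y0 + s * y1 ≤ Real.sqrt 2 := by nlinarith [Real.sqrt_nonneg 2]
  have hd1 : (c * y0 + s * y1) / Real.sqrt 2 ≤ 1 := by rw [div_le_one hsqrt2]; exact hAle
  have hd0 : 0 ≤ (c * y0 + s * y1) / Real.sqrt 2 := by positivity
  refine ⟨Real.arccos ((c * y0 + s * y1) / Real.sqrt 2),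
    ⟨Real.arccos_nonneg _, (Real.arccos_le_pi_div_two).2 hd0⟩, ?_, ?_⟩
  · rw [Real.cos_arccos (by linarith) hd1]
    field_simp
  · rw [Real.sin_arccos]
    have key : Real.sqrt 2 * Real.sqrt (1 - ((c * y0 + s * y1) / Real.sqrt 2) ^ 2) =
        Real.sqrt (2 - (c * y0 + s * y1) ^ 2) := by
      rw [← Real.sqrt_mul (by norm_num)]
      congr 1
      field_simp
      rw [hsq2]
    rw [key]
    have hcsle : c + s ≤ Real.sqrt 2 := by nlinarith [sq_nonneg (c - s), Real.sqrt_nonneg 2]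
    have hBle : c * x1 + s * x0 ≤ Real.sqrt (2 - (c * y0 + s * y1) ^ 2) := by
      have hB0 : 0 ≤ c * x1 + s * x0 := by positivity
      nlinarith [Real.sq_sqrt (show (0:ℝ) ≤ 2 - (c * y0 + s * y1) ^ 2 by nlinarith),
        Real.sqrt_nonneg (2 - (c * y0 + s * y1) ^ 2)]
    linarith

/-- Key lemma: for all `θ, φ₀, φ₁ ∈ [0, π/2]` there exists `φ ∈ [0, π/2]`
with `cos(θ/2)cos φ₀ + sin(θ/2)cos φ₁ = √2 cos φ` and
`cos(θ/2) + sin(θ/2) + cos(θ/2)sin φ₁ + sin(θ/2)sin φ₀ ≤ √2 + √2 sin φ`. -/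
theorem symmetrisation_lemma
    (θ φ₀ φ₁ : ℝ)
    (hθ : θ ∈ Set.Icc 0 (π / 2)) (hφ₀ : φ₀ ∈ Set.Icc 0 (π / 2))
    (hφ₁ : φ₁ ∈ Set.Icc 0 (π / 2)) :
    ∃ φ ∈ Set.Icc 0 (π / 2),
      cos (θ / 2) * cos φ₀ + sin (θ / 2) * cos φ₁ = Real.sqrt 2 * cos φ ∧
      cos (θ / 2) + sin (θ / 2) + cos (θ / 2) * sin φ₁ + sin (θ / 2) * sin φ₀ ≤
        Real.sqrt 2 + Real.sqrt 2 * sin φ := by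
  obtain ⟨hθ0, hθ1⟩ := hθ
  obtain ⟨hφ₀0, hφ₀1⟩ := hφ₀
  obtain ⟨hφ₁0, hφ₁1⟩ := hφ₁
  have hpi := Real.pi_pos
  exact symmetrisation_aux (cos (θ / 2)) (sin (θ / 2)) (sin φ₀) (cos φ₀) (sin φ₁) (cos φ₁)
    (by rw [add_comm]; exact sin_sq_add_cos_sq _) (sin_sq_add_cos_sq _) (sin_sq_add_cos_sq _)
    (cos_nonneg_of_mem_Icc ⟨by linarith, by linarith⟩)
    (sin_nonneg_of_nonneg_of_le_pi (by linarith) (by linarith))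
    (sin_nonneg_of_nonneg_of_le_pi hφ₀0 (by linarith))
    (cos_nonneg_of_mem_Icc ⟨by linarith, hφ₀1⟩)
    (sin_nonneg_of_nonneg_of_le_pi hφ₁0 (by linarith))
    (cos_nonneg_of_mem_Icc ⟨by linarith, hφ₁1⟩)
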